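/- arXiv:1810.13198 — 3 statements merged into one kernel-verified Lean document; each statement's English description precedes it below -/
import Mathlib

section
/- For every natural number k, the (k+1)×(k+1) determinant with (i,j) entry c_{i+j+1} (0 ≤ i, j ≤ k) equals the (k+1)×(k+1) determinant with (i,j) entry c_{i+j} (0 ≤ i, j ≤ k); that is, H_{2k+1} = H_{2k} for the Hankel determinants of the Catalan numbers. -/
open Finset

/-- number of ±1 paths of length `m` from height 0 to height `h` staying ≥ 0 -/
def bp : ℕ → ℕ → ℕ
  | 0, 0 => 1
  | 0, _+1 => 0
  | m+1, 0 => bp m 1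
  | m+1, h+1 => bp m h + bp m (h+2)

lemma bp_eq_zero : ∀ m h, m < h → bp m h = 0
  | 0, _+1, _ => rfl
  | m+1, h+1, hlt => by
      simp [bp, bp_eq_zero m h (by omega), bp_eq_zero m (h+2) (by omega)]

lemma bp_diag : ∀ m, bp m m = 1
  | 0 => rfl
  | m+1 => by simp [bp, bp_diag m, bp_eq_zero m (m+2) (by omega)]

lemma bp_parity : ∀ m h, (m + h) % 2 = 1 → bp m h = 0
  | 0, 0, hp => by omega
  | 0, _+1, _ => rfl
  | m+1, 0, hp => bp_parity m 1 (by omega)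
  | m+1, h+1, hp => by
      simp [bp, bp_parity m h (by omega), bp_parity m (h+2) (by omega)]

lemma bp_step_sum (m m' R : ℕ) (hR : m + 2 ≤ R) :
    ∑ h ∈ range R, bp (m+1) h * bp m' h =
      (∑ h ∈ range R, bp m h * bp m' (h+1)) +
      ∑ h ∈ range R, bp m (h+1) * bp m' h := by
  obtain ⟨r, rfl⟩ : ∃ r, R = r + 1 := ⟨R - 1, by omega⟩
  rw [Finset.sum_range_succ' (fun h => bp (m+1) h * bp m' h),
      Finset.sum_range_succ' (fun h => bp m (h+1) * bp m' h),
      Finset.sum_range_succ (fun h => bp m h * bp m' (h+1))]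
  have h1 : ∀ h, bp (m+1) (h+1) = bp m h + bp m (h+2) := fun h => rfl
  have h2 : bp (m+1) 0 = bp m 1 := rfl
  simp only [h1, h2, add_mul, Finset.sum_add_distrib]
  rw [bp_eq_zero m r (by omega)]
  ring

lemma bp_conv : ∀ m m' R, m + m' + 2 ≤ R →
    ∑ h ∈ range R, bp m h * bp m' h = bp (m + m') 0
  | 0, m', R, hR => by
      rw [Finset.sum_eq_single 0]
      · simp [bp]
      · intro h _ hh
        obtain ⟨g, rfl⟩ : ∃ g, h = g + 1 := ⟨h - 1, by omega⟩
        simp [bp]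
      · intro h; exact absurd (Finset.mem_range.2 (by omega)) h
  | m+1, m', R, hR => by
      have e1 := bp_step_sum m m' R (by omega)
      have e2 := bp_step_sum m' m R (by omega)
      have ih := bp_conv m (m'+1) R (by omega)
      have e3 : ∑ h ∈ range R, bp m h * bp (m'+1) h
          = ∑ h ∈ range R, bp (m'+1) h * bp m h := by
        simp [mul_comm]
      rw [e3, e2] at ih
      rw [e1, show m + 1 + m' = m + (m' + 1) by omega, ← ih]
      rw [add_comm]
      congr 1
      · simp [mul_comm]
      · simp [mul_comm]

def p (m : ℕ) (k : ℤ) : ℤ := if 0 ≤ k then (m.choose k.toNat : ℤ) else 0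

lemma p_pascal (m : ℕ) (k : ℤ) : p (m+1) k = p m k + p m (k-1) := by
  rcases lt_trichotomy k 0 with h|h|h
  · simp [p, not_le.2 h, not_le.2 (by omega : k - 1 < 0)]
    intro h'; omega
  · subst h; simp [p]
  · obtain ⟨j, rfl⟩ : ∃ j : ℕ, k = (j:ℤ)+1 := ⟨k.toNat - 1, by omega⟩
    have h1 : ((j:ℤ)+1).toNat = j+1 := by omega
    have h2 : ((j:ℤ)+1-1).toNat = j := by omega
    simp only [p, h1, h2, if_pos (by omega : (0:ℤ) ≤ (j:ℤ)+1),
      if_pos (by omega : (0:ℤ) ≤ (j:ℤ)+1-1), Nat.choose_succ_succ]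
    push_cast; ring

lemma bp_formula : ∀ m k : ℕ, 2*k ≤ m → (bp m (m - 2*k) : ℤ) = p m k - p m ((k:ℤ) - 1)
  | 0, k, h => by
      obtain rfl : k = 0 := by omega
      simp [bp, p]
  | m+1, k, h => by
      rcases Nat.eq_zero_or_pos k with rfl|hk
      · simp only [Nat.mul_zero, Nat.sub_zero, bp_diag]
        simp [p, show ¬ ((0:ℤ) ≤ (0:ℤ)-1) by omega]
      obtain ⟨j, rfl⟩ := Nat.exists_eq_succ_of_ne_zero (by omega : k ≠ 0)
      rcases Nat.lt_or_ge (2*(j+1)) (m+1) with hlt|hge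
      · have hm : m + 1 - 2*(j+1) = (m - 2*(j+1)) + 1 := by omega
        rw [hm, show bp (m+1) ((m - 2*(j+1)) + 1)
              = bp m (m - 2*(j+1)) + bp m (m - 2*(j+1) + 2) from rfl,
            show m - 2*(j+1) + 2 = m - 2*j by omega]
        have i1 := bp_formula m (j+1) (by omega)
        have i2 := bp_formula m j (by omega)
        push_cast
        push_cast at i1 i2
        rw [i1, i2, p_pascal, p_pascal]
        ring_nf
      · have h0 : m + 1 - 2*(j+1) = 0 := by omega
        rw [h0, show bp (m+1) 0 = bp m 1 from rfl,
            show bp m 1 = bp m (m - 2*j) by rw [show m - 2*j = 1 by omega]]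
        have i2 := bp_formula m j (by omega)
        rw [i2, p_pascal, p_pascal]
        have hsym : p m ((j:ℤ)+1) = p m (j:ℤ) := by
          have hm : m = 2*j+1 := by omega
          have h1 : ((j:ℤ)+1).toNat = j+1 := by omega
          have h2 : ((j:ℤ)).toNat = j := by omega
          simp only [p, h1, h2, hm, if_pos (by omega : (0:ℤ) ≤ (j:ℤ)+1),
            if_pos (by omega : (0:ℤ) ≤ (j:ℤ)), Nat.choose_symm_half]
        push_cast
        rw [show ((j:ℤ)+1-1) = (j:ℤ) by ring, hsym]
        ring

lemma bp_zero_eq_catalan (n : ℕ) : (bp (2*n) 0 : ℤ) = catalan n := by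
  have hf := bp_formula (2*n) n (le_refl _)
  rw [Nat.sub_self] at hf
  rcases Nat.eq_zero_or_pos n with rfl|hn
  · simp [p] at hf
    simpa [catalan_zero] using hf
  have h1 : ((n:ℤ)).toNat = n := by omega
  have h2 : ((n:ℤ)-1).toNat = n - 1 := by omega
  rw [p, p, if_pos (by positivity), if_pos (by omega), h1, h2] at hf
  rw [hf]
  have key : ((2*n).choose n : ℤ) * n = ((2*n).choose (n-1) : ℤ) * (n+1) := by
    have := Nat.choose_succ_right_eq (2*n) (n-1)
    rw [show n - 1 + 1 = n by omega, show 2*n - (n-1) = n + 1 by omega] at this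
    exact_mod_cast this
  have hcat : ((n:ℤ)+1) * catalan n = (2*n).choose n := by
    have := succ_mul_catalan_eq_centralBinom n
    rw [Nat.centralBinom_eq_two_mul_choose] at this
    exact_mod_cast this
  have hpos : ((n:ℤ)+1) ≠ 0 := by positivity
  apply mul_left_cancel₀ hpos
  rw [hcat]
  nlinarith [key, hcat]

lemma sum_range_two_mul (K : ℕ) (f : ℕ → ℕ) :
    ∑ h ∈ range (2*K), f h = ∑ t ∈ range K, (f (2*t) + f (2*t+1)) := by
  induction K with
  | zero => simp
  | succ K ih =>
      rw [show 2*(K+1) = (2*K + 1) + 1 by ring, Finset.sum_range_succ,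
        Finset.sum_range_succ, ih, Finset.sum_range_succ]
      omega

lemma even_entry (k i j : ℕ) (hi : i ≤ k) (hj : j ≤ k) :
    ∑ t ∈ range (k+1), bp (2*i) (2*t) * bp (2*j) (2*t) = bp (2*(i+j)) 0 := by
  have hconv := bp_conv (2*i) (2*j) (2*(2*k+3)) (by omega)
  rw [sum_range_two_mul] at hconv
  have hodd : ∀ t, bp (2*i) (2*t+1) * bp (2*j) (2*t+1) = 0 := by
    intro t; rw [bp_parity (2*i) (2*t+1) (by omega)]; ring
  simp only [hodd, add_zero] at hconv
  rw [show 2*i+2*j = 2*(i+j) by ring] at hconv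
  rw [← hconv]
  apply Finset.sum_subset
  · exact Finset.range_subset_range.2 (by omega)
  · intro t _ ht
    rw [bp_eq_zero (2*i) (2*t) (by simp [Finset.mem_range] at ht; omega)]
    ring

lemma odd_entry (k i j : ℕ) (hi : i ≤ k) (hj : j ≤ k) :
    ∑ t ∈ range (k+1), bp (2*i+1) (2*t+1) * bp (2*j+1) (2*t+1)
      = bp (2*(i+j+1)) 0 := by
  have hconv := bp_conv (2*i+1) (2*j+1) (2*(2*k+3)) (by omega)
  rw [sum_range_two_mul] at hconv
  have hev : ∀ t, bp (2*i+1) (2*t) * bp (2*j+1) (2*t) = 0 := by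
    intro t; rw [bp_parity (2*i+1) (2*t) (by omega)]; ring
  simp only [hev, zero_add] at hconv
  rw [show 2*i+1+(2*j+1) = 2*(i+j+1) by ring] at hconv
  rw [← hconv]
  apply Finset.sum_subset
  · exact Finset.range_subset_range.2 (by omega)
  · intro t _ ht
    rw [bp_eq_zero (2*i+1) (2*t+1) (by simp [Finset.mem_range] at ht; omega)]
    ring

/-- For every natural number k, the (k+1)×(k+1) determinant with (i,j)
entry c_{i+j+1} equals the (k+1)×(k+1) determinant with (i,j) entry c_{i+j};
that is, H_{2k+1} = H_{2k} for the Hankel determinants of the Catalan numbers. -/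
theorem catalan_hankel_odd_eq_even (k : ℕ) :
    Matrix.det (Matrix.of fun i j : Fin (k + 1) =>
      (catalan (i.val + j.val + 1) : ℤ)) =
    Matrix.det (Matrix.of fun i j : Fin (k + 1) =>
      (catalan (i.val + j.val) : ℤ)) := by
  set L : Matrix (Fin (k+1)) (Fin (k+1)) ℤ :=
    Matrix.of fun i t => (bp (2*i.val) (2*t.val) : ℤ) with hLdef
  set M : Matrix (Fin (k+1)) (Fin (k+1)) ℤ :=
    Matrix.of fun i t => (bp (2*i.val+1) (2*t.val+1) : ℤ) with hMdef
  have hL : (Matrix.of fun i j : Fin (k + 1) => (catalan (i.val + j.val) : ℤ))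
      = L * L.transpose := by
    ext i j
    simp only [Matrix.mul_apply, Matrix.transpose_apply, hLdef, Matrix.of_apply]
    rw [← bp_zero_eq_catalan (i.val + j.val),
      ← even_entry k i.val j.val (by omega) (by omega)]
    rw [← Fin.sum_univ_eq_sum_range (fun t => bp (2*i.val) (2*t) * bp (2*j.val) (2*t)) (k+1)]
    push_cast
    rfl
  have hM : (Matrix.of fun i j : Fin (k + 1) => (catalan (i.val + j.val + 1) : ℤ))
      = M * M.transpose := by
    ext i j
    simp only [Matrix.mul_apply, Matrix.transpose_apply, hMdef, Matrix.of_apply]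
    rw [← bp_zero_eq_catalan (i.val + j.val + 1),
      ← odd_entry k i.val j.val (by omega) (by omega)]
    rw [← Fin.sum_univ_eq_sum_range
      (fun t => bp (2*i.val+1) (2*t+1) * bp (2*j.val+1) (2*t+1)) (k+1)]
    push_cast
    rfl
  have hdetL : L.det = 1 := by
    rw [Matrix.det_of_lowerTriangular L (by
      intro i j hij
      simp only [hLdef, Matrix.of_apply]
      rw [bp_eq_zero (2*i.val) (2*j.val) (by
        have : (i:Fin (k+1)) < j := hij
        have := Fin.lt_def.mp this
        omega)]
      simp)]
    simp only [hLdef, Matrix.of_apply, bp_diag]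
    simp
  have hdetM : M.det = 1 := by
    rw [Matrix.det_of_lowerTriangular M (by
      intro i j hij
      simp only [hMdef, Matrix.of_apply]
      rw [bp_eq_zero (2*i.val+1) (2*j.val+1) (by
        have : (i:Fin (k+1)) < j := hij
        have := Fin.lt_def.mp this
        omega)]
      simp)]
    simp only [hMdef, Matrix.of_apply, bp_diag]
    simp
  rw [hL, hM, Matrix.det_mul, Matrix.det_mul, Matrix.det_transpose,
    Matrix.det_transpose, hdetL, hdetM]
end

section
/- Let f be the exponential generating function of the Catalan numbers. Then all its Hankel–Wronskian determinants equal 1 at the origin: w_n(0) = 1 for every n ≥ 0. -/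
open Finset Matrix


open scoped Nat

/-- The Hankel–Wronskian determinants `w_n(t)` associated with a function `f`:
for `n = 2k ≥ 0` it is the determinant of the (k+1)×(k+1) matrix with (i,j) entry
`f^(i+j)(t)`; for `n = 2k+1 ≥ 0` the (i,j) entry is `f^(i+j+1)(t)`;
and `w_{-3} = 0`, `w_{-2} = w_{-1} = 1`. -/
noncomputable def hankelWronskian (f : ℝ → ℝ) (n : ℤ) (t : ℝ) : ℝ :=
  if n = -3 then 0
  else if n < 0 then 1
  else if n.toNat % 2 = 0 then
    Matrix.det (Matrix.of fun i j : Fin (n.toNat / 2 + 1) =>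
      iteratedDeriv (i.val + j.val) f t)
  else
    Matrix.det (Matrix.of fun i j : Fin (n.toNat / 2 + 1) =>
      iteratedDeriv (i.val + j.val + 1) f t)

/-- `u_n = w_{n-3}·w_n / (w_{n-2}·w_{n-1})`. -/
noncomputable def uChain (f : ℝ → ℝ) (n : ℕ) (t : ℝ) : ℝ :=
  hankelWronskian f ((n : ℤ) - 3) t * hankelWronskian f (n : ℤ) t /
    (hankelWronskian f ((n : ℤ) - 2) t * hankelWronskian f ((n : ℤ) - 1) t)

/-- `v_n = w_{n-3}·w_{n-1} / w_{n-2}²`. -/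
noncomputable def vChain (f : ℝ → ℝ) (n : ℕ) (t : ℝ) : ℝ :=
  hankelWronskian f ((n : ℤ) - 3) t * hankelWronskian f ((n : ℤ) - 1) t /
    (hankelWronskian f ((n : ℤ) - 2) t) ^ 2

/-- The exponential generating function of the Catalan numbers. -/
noncomputable def catalanEGF (t : ℝ) : ℝ := ∑' n : ℕ, (catalan n : ℝ) * t ^ n / n !

/-- Ballot-type numbers: entries of the unitriangular Cholesky factor. -/
def bal (s n k : ℕ) : ℤ :=
  (Nat.choose (2*n+s) (n-k) : ℤ) - Nat.choose (2*n+s) (n+k+1+s)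

lemma bal_diag (s n : ℕ) : bal s n n = 1 := by
  simp [bal, Nat.choose_eq_zero_of_lt (by omega : 2*n+s < n+n+1+s)]

lemma catalan_eq (m : ℕ) :
    (catalan m : ℤ) = Nat.choose (2*m) m - Nat.choose (2*m) (m+1) := by
  have h1 : (m + 1) * catalan m = Nat.centralBinom m := succ_mul_catalan_eq_centralBinom m
  have h2 : Nat.choose (2*m) (m+1) * (m+1) = Nat.choose (2*m) m * (2*m - m) :=
    Nat.choose_succ_right_eq (2*m) m
  have h3 : Nat.centralBinom m = Nat.choose (2*m) m := Nat.centralBinom_eq_two_mul_choose m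
  rw [h3] at h1
  have hmm : 2*m - m = m := by omega
  rw [hmm] at h2
  have h1' : ((m:ℤ)+1) * catalan m = Nat.choose (2*m) m := by exact_mod_cast h1
  have h2' : (Nat.choose (2*m) (m+1) : ℤ) * ((m:ℤ)+1) = (Nat.choose (2*m) m : ℤ) * m := by
    exact_mod_cast h2
  have hm : ((m:ℤ)+1) ≠ 0 := by positivity
  refine mul_left_cancel₀ hm ?_
  linear_combination h1' + h2'

lemma vander (p q T : ℕ) :
    (Nat.choose (p+q) T : ℤ) = ∑ a ∈ range (T+1), (Nat.choose p a : ℤ) * Nat.choose q (T-a) := by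
  rw [Nat.add_choose_eq, Finset.Nat.sum_antidiagonal_eq_sum_range_succ_mk]
  push_cast
  rfl

lemma key (s i j : ℕ) (hs : s ≤ 1) (hij : i ≤ j) :
    ∑ k ∈ range (i+1), bal s i k * bal s j k =
      (Nat.choose (2*(i+j+s)) (i+j+s) : ℤ) - Nat.choose (2*(i+j+s)) (i+j+s+1) := by
  set p := 2*i+s with hp
  set q := 2*j+s with hq
  set m := i+j+s with hm
  have trunc : ∀ T : ℕ, m ≤ T →
      (Nat.choose (2*m) T : ℤ) = ∑ a ∈ range (p+1), (Nat.choose p a : ℤ) * Nat.choose q (T-a) := by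
    intro T hT
    have hpq : p + q = 2*m := by omega
    rw [← hpq, vander]
    refine (Finset.sum_subset (by apply Finset.range_subset_range.2; omega) ?_).symm
    intro a ha hna
    simp only [mem_range] at ha hna
    rw [Nat.choose_eq_zero_of_lt (by omega : p < a)]
    ring
  have split : ∀ g : ℕ → ℤ, ∑ a ∈ range (p+1), g a =
      (∑ a ∈ range (i+1), g a) + (∑ a ∈ Ico (i+1) (i+1+s), g a) + ∑ a ∈ Ico (i+1+s) (p+1), g a := by
    intro g
    rw [range_eq_Ico, ← Finset.sum_Ico_consecutive _ (by omega : 0 ≤ i+1) (by omega : i+1 ≤ p+1),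
      ← Finset.sum_Ico_consecutive _ (by omega : i+1 ≤ i+1+s) (by omega : i+1+s ≤ p+1),
      ← range_eq_Ico]
    ring
  -- the two truncated Vandermonde sums, split into three pieces
  set f : ℕ → ℤ := fun a => (Nat.choose p a : ℤ) * Nat.choose q (m-a) with hf
  set g : ℕ → ℤ := fun a => (Nat.choose p a : ℤ) * Nat.choose q (m+1-a) with hg
  have hVm : (Nat.choose (2*m) m : ℤ) = ∑ a ∈ range (p+1), f a := trunc m le_rfl
  have hVm1 : (Nat.choose (2*m) (m+1) : ℤ) = ∑ a ∈ range (p+1), g a := by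
    rw [trunc (m+1) (by omega)]
  -- reflected head pieces
  have hA : ∑ a ∈ range (i+1), f a = ∑ k ∈ range (i+1), (Nat.choose p (i-k) : ℤ) * Nat.choose q (j+k+s) := by
    rw [← Finset.sum_range_reflect]
    refine Finset.sum_congr rfl fun k hk => ?_
    simp only [mem_range] at hk
    have h1 : i + 1 - 1 - k = i - k := by omega
    have h2 : m - (i-k) = j+k+s := by omega
    rw [hf]; simp only [h1, h2]
  have hB : ∑ a ∈ range (i+1), g a = ∑ k ∈ range (i+1), (Nat.choose p (i-k) : ℤ) * Nat.choose q (j+k+1+s) := by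
    rw [← Finset.sum_range_reflect]
    refine Finset.sum_congr rfl fun k hk => ?_
    simp only [mem_range] at hk
    have h1 : i + 1 - 1 - k = i - k := by omega
    have h2 : m + 1 - (i-k) = j+k+1+s := by omega
    rw [hg]; simp only [h1, h2]
  -- tail pieces
  have hIf : ∑ a ∈ Ico (i+1+s) (p+1), f a =
      ∑ k ∈ range i, (Nat.choose p (i+k+1+s) : ℤ) * Nat.choose q (j-1-k) := by
    rw [Finset.sum_Ico_eq_sum_range]
    have hlen : p + 1 - (i+1+s) = i := by omega
    rw [hlen]
    refine Finset.sum_congr rfl fun k hk => ?_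
    simp only [mem_range] at hk
    have h1 : i+1+s+k = i+k+1+s := by omega
    have h2 : m - (i+k+1+s) = j-1-k := by omega
    rw [hf]; simp only [h1, h2]
  have hIg : ∑ a ∈ Ico (i+1+s) (p+1), g a =
      ∑ k ∈ range i, (Nat.choose p (i+k+1+s) : ℤ) * Nat.choose q (j-k) := by
    rw [Finset.sum_Ico_eq_sum_range]
    have hlen : p + 1 - (i+1+s) = i := by omega
    rw [hlen]
    refine Finset.sum_congr rfl fun k hk => ?_
    simp only [mem_range] at hk
    have h1 : i+1+s+k = i+k+1+s := by omega
    have h2 : m + 1 - (i+k+1+s) = j-k := by omega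
    rw [hg]; simp only [h1, h2]
  -- the middle (gap) pieces coincide
  have hgap : ∑ a ∈ Ico (i+1) (i+1+s), f a = ∑ a ∈ Ico (i+1) (i+1+s), g a := by
    refine Finset.sum_congr rfl fun a ha => ?_
    simp only [mem_Ico] at ha
    have hs1 : s = 1 := by omega
    subst hs1
    have ha1 : a = i+1 := by omega
    subst ha1
    have h2 : m - (i+1) = j := by omega
    have h3 : m + 1 - (i+1) = j + 1 := by omega
    have h4 : (Nat.choose q j : ℤ) = Nat.choose q (j+1) := by
      have : q - (j+1) = j := by omega
      rw [← Nat.choose_symm (by omega : j+1 ≤ q), this]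
    rw [hf, hg]; simp only [h2, h3, h4]
  -- expand the left-hand side
  have hexp : ∑ k ∈ range (i+1), bal s i k * bal s j k =
      (∑ k ∈ range (i+1), (Nat.choose p (i-k) : ℤ) * Nat.choose q (j+k+s))
      - (∑ k ∈ range (i+1), (Nat.choose p (i-k) : ℤ) * Nat.choose q (j+k+1+s))
      - (∑ k ∈ range (i+1), (Nat.choose p (i+k+1+s) : ℤ) * Nat.choose q (j-k))
      + (∑ k ∈ range (i+1), (Nat.choose p (i+k+1+s) : ℤ) * Nat.choose q (j+k+1+s)) := by
    rw [← Finset.sum_sub_distrib, ← Finset.sum_sub_distrib, ← Finset.sum_add_distrib]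
    refine Finset.sum_congr rfl fun k hk => ?_
    simp only [mem_range] at hk
    have e1 : (Nat.choose q (j-k) : ℤ) = Nat.choose q (j+k+s) := by
      have : q - (j-k) = j+k+s := by omega
      rw [← Nat.choose_symm (by omega : j-k ≤ q), this]
    have hbi : bal s i k = (Nat.choose p (i-k) : ℤ) - Nat.choose p (i+k+1+s) := rfl
    have hbj : bal s j k = (Nat.choose q (j-k) : ℤ) - Nat.choose q (j+k+1+s) := rfl
    rw [hbi, hbj]
    linear_combination (Nat.choose p (i-k) : ℤ) * e1
  -- drop the vanishing top terms of the two tail-type sums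
  have htop : (Nat.choose p (i+i+1+s) : ℤ) = 0 := by
    rw [Nat.choose_eq_zero_of_lt (by omega : p < i+i+1+s)]; rfl
  have h3top : ∑ k ∈ range (i+1), (Nat.choose p (i+k+1+s) : ℤ) * Nat.choose q (j-k)
      = ∑ k ∈ range i, (Nat.choose p (i+k+1+s) : ℤ) * Nat.choose q (j-k) := by
    rw [Finset.sum_range_succ, show i+i+1+s = i+i+1+s from rfl, htop]
    ring
  have h4top : ∑ k ∈ range (i+1), (Nat.choose p (i+k+1+s) : ℤ) * Nat.choose q (j+k+1+s)
      = ∑ k ∈ range i, (Nat.choose p (i+k+1+s) : ℤ) * Nat.choose q (j-1-k) := by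
    rw [Finset.sum_range_succ, htop]
    rw [zero_mul, add_zero]
    refine Finset.sum_congr rfl fun k hk => ?_
    simp only [mem_range] at hk
    have e : (Nat.choose q (j+k+1+s) : ℤ) = Nat.choose q (j-1-k) := by
      have : q - (j+k+1+s) = j-1-k := by omega
      rw [← Nat.choose_symm (by omega : j+k+1+s ≤ q), this]
    rw [e]
  rw [hexp, h3top, h4top]
  rw [split f] at hVm
  rw [split g] at hVm1
  rw [hA, hIf] at hVm
  rw [hB, hIg] at hVm1
  rw [hgap] at hVm
  linarith [hVm, hVm1]

lemma balSum_le (s : ℕ) (hs : s ≤ 1) {N i j : ℕ} (hij : i ≤ j) (hj : j < N) :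
    ∑ k ∈ range N, (if k ≤ i then bal s i k else 0) * (if k ≤ j then bal s j k else 0)
      = (catalan (i+j+s) : ℤ) := by
  rw [catalan_eq, ← key s i j hs hij]
  have hsub : range (i+1) ⊆ range N := Finset.range_subset_range.2 (by omega)
  refine (Finset.sum_subset hsub ?_).symm.trans ?_
  · intro k hk hnk
    simp only [mem_range] at hk hnk
    rw [if_neg (by omega)]
    ring
  · refine Finset.sum_congr rfl fun k hk => ?_
    simp only [mem_range] at hk
    rw [if_pos (by omega), if_pos (by omega)]

lemma balSum (s : ℕ) (hs : s ≤ 1) {N i j : ℕ} (hi : i < N) (hj : j < N) :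
    ∑ k ∈ range N, (if k ≤ i then bal s i k else 0) * (if k ≤ j then bal s j k else 0)
      = (catalan (i+j+s) : ℤ) := by
  rcases le_total i j with h | h
  · exact balSum_le s hs h hj
  · rw [show i+j+s = j+i+s by ring, ← balSum_le s hs h hi]
    refine Finset.sum_congr rfl fun k _ => mul_comm _ _

lemma det_hankel_catalan (s : ℕ) (hs : s ≤ 1) (t : ℕ) :
    Matrix.det (Matrix.of fun i j : Fin (t+1) => (catalan (i.val + j.val + s) : ℝ)) = 1 := by
  set L : Matrix (Fin (t+1)) (Fin (t+1)) ℝ :=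
    Matrix.of (fun i k : Fin (t+1) => if (k:ℕ) ≤ (i:ℕ) then (bal s i k : ℝ) else 0) with hL
  have hH : (Matrix.of fun i j : Fin (t+1) => (catalan (i.val + j.val + s) : ℝ)) = L * Lᵀ := by
    ext i j
    rw [Matrix.mul_apply]
    have : ∀ k : Fin (t+1), L i k * Lᵀ k j =
        (((if (k:ℕ) ≤ (i:ℕ) then bal s i k else 0) * (if (k:ℕ) ≤ (j:ℕ) then bal s j k else 0) : ℤ) : ℝ) := by
      intro k
      simp only [hL, Matrix.transpose_apply, Matrix.of_apply]
      push_cast [apply_ite (fun z : ℤ => (z : ℝ))]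
      ring
    simp only [this]
    rw [← Int.cast_sum]
    rw [Fin.sum_univ_eq_sum_range
      (fun k => (if k ≤ (i:ℕ) then bal s i k else 0) * (if k ≤ (j:ℕ) then bal s j k else 0))]
    rw [balSum s hs i.isLt j.isLt]
    simp
  rw [hH, Matrix.det_mul, Matrix.det_transpose]
  have hdet : L.det = 1 := by
    have htri : L.BlockTriangular OrderDual.toDual := by
      intro i j hij
      have h2 : (i:ℕ) < (j:ℕ) := OrderDual.toDual_lt_toDual.mp hij
      simp only [hL, Matrix.of_apply]
      rw [if_neg (by omega)]
    rw [Matrix.det_of_lowerTriangular L htri]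
    refine Finset.prod_eq_one fun i _ => ?_
    simp [hL, bal_diag]
  rw [hdet]; norm_num

lemma catalan_le_four_pow (n : ℕ) : catalan n ≤ 4^n := by
  have h1 : catalan n ≤ (n+1) * catalan n := Nat.le_mul_of_pos_left _ (by omega)
  rw [succ_mul_catalan_eq_centralBinom] at h1
  have h2 : Nat.centralBinom n ≤ 4^n := by
    rw [Nat.centralBinom_eq_two_mul_choose]
    calc (2*n).choose n ≤ ∑ i ∈ range (2*n+1), (2*n).choose i :=
          Finset.single_le_sum (fun i _ => Nat.zero_le _) (by simp only [mem_range]; omega)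
      _ = 2^(2*n) := Nat.sum_range_choose (2*n)
      _ = 4^n := by rw [pow_mul]; norm_num
  omega

lemma summable_cat (y : ℝ) : Summable (fun n : ℕ => (catalan n : ℝ) * y^n / n !) := by
  refine Summable.of_norm_bounded (Real.summable_pow_div_factorial (4*|y|)) fun n => ?_
  have hc : (catalan n : ℝ) ≤ 4^n := by exact_mod_cast catalan_le_four_pow n
  have h0 : (0:ℝ) < n ! := by positivity
  rw [norm_div, norm_mul, Real.norm_natCast, norm_pow, Real.norm_eq_abs,
    Real.norm_natCast, mul_pow]
  gcongr

noncomputable def catalanSeries : FormalMultilinearSeries ℝ ℝ ℝ :=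
  FormalMultilinearSeries.ofScalars ℝ (fun n => (catalan n : ℝ) / n !)

lemma hasFPS : HasFPowerSeriesOnBall catalanEGF catalanSeries 0 1 := by
  constructor
  · refine FormalMultilinearSeries.le_radius_of_summable_norm _ ?_
    have : Summable (fun n : ℕ => (catalan n : ℝ) * (1:ℝ)^n / n !) := summable_cat 1
    refine this.congr fun n => ?_
    rw [catalanSeries, FormalMultilinearSeries.ofScalars_norm]
    push_cast
    rw [norm_div, Real.norm_natCast, Real.norm_natCast]
    ring
  · exact one_pos
  · intro y _
    rw [zero_add]
    have heq : ∀ n : ℕ, (catalanSeries n fun _ => y) = (catalan n : ℝ) * y^n / n ! := by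
      intro n
      rw [catalanSeries, FormalMultilinearSeries.ofScalars_apply_eq, smul_eq_mul]
      ring
    simp only [heq]
    exact (summable_cat y).hasSum

lemma iteratedDeriv_catalanEGF (k : ℕ) : iteratedDeriv k catalanEGF 0 = catalan k := by
  have h := hasFPS.factorial_smul (1:ℝ) k
  have h2 : catalanSeries k (fun _ => (1:ℝ)) = (catalan k : ℝ) / k ! := by
    rw [catalanSeries, FormalMultilinearSeries.ofScalars_apply_eq]
    simp
  rw [h2] at h
  have h3 : iteratedDeriv k catalanEGF 0 = iteratedFDeriv ℝ k catalanEGF 0 (fun _ => 1) := rfl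
  rw [h3, ← h, nsmul_eq_mul]
  have h0 : (k ! : ℝ) ≠ 0 := by positivity
  field_simp

/-- All Hankel–Wronskian determinants of the exponential generating
function of the Catalan numbers equal 1 at the origin: `w_n(0) = 1` for `n ≥ 0`. -/
theorem hankelWronskian_catalan_egf_at_zero (n : ℕ) :
    hankelWronskian catalanEGF (n : ℤ) 0 = 1 := by
  rw [hankelWronskian, if_neg (by omega), if_neg (by omega)]
  have ht : (n : ℤ).toNat = n := Int.toNat_natCast n
  rw [ht]
  by_cases h : n % 2 = 0
  · rw [if_pos h]
    have he : (Matrix.of fun i j : Fin (n/2+1) => iteratedDeriv (i.val+j.val) catalanEGF 0)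
        = (Matrix.of fun i j : Fin (n/2+1) => (catalan (i.val+j.val+0) : ℝ)) := by
      ext i j
      simp [iteratedDeriv_catalanEGF]
    rw [he, det_hankel_catalan 0 (by omega) (n/2)]
  · rw [if_neg h]
    have he : (Matrix.of fun i j : Fin (n/2+1) => iteratedDeriv (i.val+j.val+1) catalanEGF 0)
        = (Matrix.of fun i j : Fin (n/2+1) => (catalan (i.val+j.val+1) : ℝ)) := by
      ext i j
      simp [iteratedDeriv_catalanEGF]
    rw [he, det_hankel_catalan 1 (by omega) (n/2)]
end

section
/- Let f be the exponential generating function of the Catalan numbers. Then f'(t)/f(t) tends to 4 as t → +∞. -/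
open scoped Nat

namespace CatalanEGFAux

open Filter Topology

set_option maxHeartbeats 1000000

lemma catalan_pos (n : ℕ) : 0 < catalan n := by
  rcases Nat.eq_zero_or_pos (catalan n) with h | h
  · have h2 := succ_mul_catalan_eq_centralBinom n
    rw [h, mul_zero] at h2
    exact absurd h2.symm (Nat.centralBinom_pos n).ne'
  · exact h

lemma catalan_rec (n : ℕ) : (n + 2) * catalan (n + 1) = 2 * (2 * n + 1) * catalan n := by
  have h1 := Nat.succ_mul_centralBinom_succ n
  have h2 := succ_mul_catalan_eq_centralBinom n
  have h3 := succ_mul_catalan_eq_centralBinom (n + 1)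
  have key : (n + 1) * ((n + 2) * catalan (n + 1)) = (n + 1) * (2 * (2 * n + 1) * catalan n) := by
    calc (n + 1) * ((n + 2) * catalan (n + 1)) = (n + 1) * ((n + 1 + 1) * catalan (n + 1)) := by
          ring_nf
      _ = (n + 1) * Nat.centralBinom (n + 1) := by rw [h3]
      _ = 2 * (2 * n + 1) * Nat.centralBinom n := h1
      _ = 2 * (2 * n + 1) * ((n + 1) * catalan n) := by rw [h2]
      _ = (n + 1) * (2 * (2 * n + 1) * catalan n) := by ring
  exact Nat.eq_of_mul_eq_mul_left (Nat.succ_pos n) key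

lemma catalan_succ_le (n : ℕ) : catalan (n + 1) ≤ 4 * catalan n := by
  have h := catalan_rec n
  have h2 : (n + 2) * catalan (n + 1) ≤ (n + 2) * (4 * catalan n) := by
    rw [h]; nlinarith [catalan_pos n]
  exact Nat.le_of_mul_le_mul_left h2 (by omega)

lemma catalan_le_four_pow (n : ℕ) : (catalan n : ℝ) ≤ 4 ^ n := by
  induction n with
  | zero => simp
  | succ n ih =>
    have h : (catalan (n + 1) : ℝ) ≤ 4 * catalan n := by exact_mod_cast catalan_succ_le n
    calc (catalan (n + 1) : ℝ) ≤ 4 * catalan n := h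
      _ ≤ 4 * 4 ^ n := by linarith
      _ = 4 ^ (n + 1) := by ring

lemma catalan_rec_real (n : ℕ) :
    ((n : ℝ) + 2) * catalan (n + 1) = 2 * (2 * n + 1) * catalan n := by
  exact_mod_cast catalan_rec n

/-- The key identity: `4 c_n - c_{n+1} = 6 c_n / (n+2)`. -/
lemma catalan_gap (n : ℕ) :
    4 * (catalan n : ℝ) - catalan (n + 1) = 6 * catalan n / ((n : ℝ) + 2) := by
  have h := catalan_rec_real n
  have hn : ((n : ℝ) + 2) ≠ 0 := by positivity
  field_simp
  nlinarith [h]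

lemma summable_b (t : ℝ) : Summable (fun n : ℕ => (catalan n : ℝ) * t ^ n / n !) := by
  apply Summable.of_norm_bounded (g := fun n => (4 * |t|) ^ n / n !)
    (Real.summable_pow_div_factorial _)
  intro n
  have h1 : ‖(catalan n : ℝ) * t ^ n / (n ! : ℝ)‖ = (catalan n : ℝ) * |t| ^ n / n ! := by
    rw [norm_div, norm_mul, norm_pow, Real.norm_eq_abs, Real.norm_eq_abs, Real.norm_natCast,
      Nat.abs_cast]
  rw [h1, mul_pow]
  gcongr
  exact catalan_le_four_pow n

lemma summable_a (t : ℝ) : Summable (fun n : ℕ => (catalan (n + 1) : ℝ) * t ^ n / n !) := by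
  apply Summable.of_norm_bounded (g := fun n => 4 * ((4 * |t|) ^ n / n !))
    ((Real.summable_pow_div_factorial _).mul_left 4)
  intro n
  have h1 : ‖(catalan (n + 1) : ℝ) * t ^ n / (n ! : ℝ)‖ = (catalan (n + 1) : ℝ) * |t| ^ n / n ! := by
    rw [norm_div, norm_mul, norm_pow, Real.norm_eq_abs, Real.norm_eq_abs, Real.norm_natCast,
      Nat.abs_cast]
  rw [h1, mul_pow]
  have h2 : (catalan (n + 1) : ℝ) ≤ 4 * 4 ^ n := by
    calc (catalan (n + 1) : ℝ) ≤ 4 ^ (n + 1) := catalan_le_four_pow (n + 1)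
      _ = 4 * 4 ^ n := by ring
  calc (catalan (n + 1) : ℝ) * |t| ^ n / n ! ≤ 4 * 4 ^ n * |t| ^ n / n ! := by gcongr
    _ = 4 * (4 ^ n * |t| ^ n / n !) := by ring

lemma hasDerivAt_egf (t : ℝ) :
    HasDerivAt catalanEGF (∑' n : ℕ, (catalan (n + 1) : ℝ) * t ^ n / n !) t := by
  set R : ℝ := |t| + 1 with hRdef
  have habs := abs_nonneg t
  have hR1 : (1 : ℝ) ≤ R := by simp only [hRdef]; linarith
  have hR0 : (0 : ℝ) < R := by linarith
  have htmem : t ∈ Set.Ioo (-R) R := by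
    constructor
    · have := neg_abs_le t; simp only [hRdef]; linarith
    · have := le_abs_self t; simp only [hRdef]; linarith
  have h0mem : (0 : ℝ) ∈ Set.Ioo (-R) R := ⟨by linarith, by linarith⟩
  have hbound : ∀ (n : ℕ) (y : ℝ), y ∈ Set.Ioo (-R) R →
      ‖(catalan n : ℝ) * ((n : ℝ) * y ^ (n - 1)) / (n ! : ℝ)‖ ≤ (8 * R) ^ n / (n ! : ℝ) := by
    intro n y hy
    have hyR : |y| ≤ R := by rw [abs_le]; exact ⟨hy.1.le, hy.2.le⟩
    have h1 : ‖(catalan n : ℝ) * ((n : ℝ) * y ^ (n - 1)) / (n ! : ℝ)‖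
        = (catalan n : ℝ) * ((n : ℝ) * |y| ^ (n - 1)) / n ! := by
      simp [Real.norm_eq_abs, abs_mul, abs_div, abs_pow, Nat.abs_cast]
    rw [h1]
    have hyn : |y| ^ (n - 1) ≤ R ^ n := by
      calc |y| ^ (n - 1) ≤ R ^ (n - 1) := by gcongr
        _ ≤ R ^ n := pow_le_pow_right₀ hR1 (Nat.sub_le n 1)
    have hn2 : (n : ℝ) ≤ 2 ^ n := by exact_mod_cast (Nat.lt_two_pow_self (n := n)).le
    have h8 : ((8 : ℝ) * R) ^ n = 4 ^ n * (2 ^ n * R ^ n) := by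
      rw [show (8 : ℝ) * R = 4 * 2 * R by ring, mul_pow, mul_pow]; ring
    calc (catalan n : ℝ) * ((n : ℝ) * |y| ^ (n - 1)) / n !
        ≤ 4 ^ n * ((2 : ℝ) ^ n * R ^ n) / n ! := by
          gcongr
          · exact catalan_le_four_pow n
      _ = (8 * R) ^ n / n ! := by rw [h8]
  have key : HasDerivAt (fun z : ℝ => ∑' n : ℕ, (catalan n : ℝ) * z ^ n / n !)
      (∑' n : ℕ, (catalan n : ℝ) * ((n : ℝ) * t ^ (n - 1)) / n !) t := by
    have hg : ∀ (n : ℕ) (y : ℝ), y ∈ Set.Ioo (-R) R →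
        HasDerivAt (fun z : ℝ => (catalan n : ℝ) * z ^ n / n !)
          ((catalan n : ℝ) * ((n : ℝ) * y ^ (n - 1)) / n !) y := fun n y _ =>
      ((hasDerivAt_pow n y).const_mul ((catalan n : ℝ))).div_const (n !)
    exact hasDerivAt_tsum_of_isPreconnected (Real.summable_pow_div_factorial (8 * R))
      isOpen_Ioo isPreconnected_Ioo hg hbound h0mem (summable_b 0) htmem
  have hsum' : Summable (fun n : ℕ => (catalan n : ℝ) * ((n : ℝ) * t ^ (n - 1)) / n !) :=
    Summable.of_norm_bounded (Real.summable_pow_div_factorial _) fun n => hbound n t htmem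
  have heq : (∑' n : ℕ, (catalan n : ℝ) * ((n : ℝ) * t ^ (n - 1)) / n !)
      = ∑' n : ℕ, (catalan (n + 1) : ℝ) * t ^ n / n ! := by
    rw [Summable.tsum_eq_zero_add hsum']
    simp only [Nat.cast_zero, zero_mul, mul_zero, zero_div, zero_add]
    apply tsum_congr
    intro n
    have hfact : (((n + 1)! : ℕ) : ℝ) = ((n : ℝ) + 1) * n ! := by
      rw [Nat.factorial_succ]; push_cast; ring
    have hn1 : ((n : ℝ) + 1) ≠ 0 := by positivity
    have hnf : ((n ! : ℕ) : ℝ) ≠ 0 := by positivity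
    rw [Nat.add_sub_cancel, hfact]
    push_cast
    field_simp
  rw [heq] at key
  exact key

/-- Single-term lower bound for `catalanEGF` at nonnegative `t`. -/
lemma le_egf (t : ℝ) (ht : 0 ≤ t) (m : ℕ) :
    (catalan m : ℝ) * t ^ m / m ! ≤ catalanEGF t := by
  apply Summable.le_tsum (summable_b t) m
  intro j _
  positivity

lemma egf_pos (t : ℝ) (ht : 0 ≤ t) : 0 < catalanEGF t := by
  have h := le_egf t ht 0
  simp at h
  linarith

noncomputable def bb (t : ℝ) : ℕ → ℝ := fun n => (catalan n : ℝ) * t ^ n / n !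

noncomputable def ee (t : ℝ) : ℕ → ℝ :=
  fun n => 4 * ((catalan n : ℝ) * t ^ n / n !) - (catalan (n + 1) : ℝ) * t ^ n / n !

lemma egf_eq (t : ℝ) : catalanEGF t = ∑' n, bb t n := rfl

lemma summable_bb (t : ℝ) : Summable (bb t) := summable_b t

lemma summable_ee (t : ℝ) : Summable (ee t) :=
  ((summable_b t).mul_left 4).sub (summable_a t)

lemma ee_eq (t : ℝ) (n : ℕ) :
    ee t n = 6 * (catalan n : ℝ) / ((n : ℝ) + 2) * t ^ n / n ! := by
  have h := catalan_gap n
  unfold ee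
  have h5 : 4 * ((catalan n : ℝ) * t ^ n / n !) - (catalan (n + 1) : ℝ) * t ^ n / n !
      = (4 * (catalan n : ℝ) - catalan (n + 1)) * t ^ n / n ! := by ring
  rw [h5, h]

lemma ee_nonneg (t : ℝ) (ht : 0 ≤ t) (n : ℕ) : 0 ≤ ee t n := by
  rw [ee_eq]
  positivity

lemma ee_tsum (t : ℝ) :
    (∑' n, ee t n) = 4 * catalanEGF t - ∑' n : ℕ, (catalan (n + 1) : ℝ) * t ^ n / n ! := by
  unfold ee
  rw [Summable.tsum_sub ((summable_b t).mul_left 4) (summable_a t), tsum_mul_left]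
  rfl

lemma tail_le_egf (t : ℝ) (ht : 0 ≤ t) (N : ℕ) : (∑' n, bb t (n + N)) ≤ catalanEGF t := by
  have h4 := Summable.sum_add_tsum_nat_add N (summable_bb t)
  have hhead0 : 0 ≤ ∑ n ∈ Finset.range N, bb t n :=
    Finset.sum_nonneg fun n _ => by unfold bb; positivity
  rw [egf_eq]
  linarith

lemma tail_bound (ε : ℝ) (hε : 0 < ε) (N : ℕ)
    (hNe : ∀ n : ℕ, N ≤ n → 6 / ((n : ℝ) + 2) ≤ ε / 4) (t : ℝ) (ht : 0 ≤ t) :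
    (∑' n, ee t (n + N)) ≤ ε / 4 * catalanEGF t := by
  have h1 : (∑' n, ee t (n + N)) ≤ ∑' n, ε / 4 * bb t (n + N) := by
    refine Summable.tsum_le_tsum (fun n => ?_) ((summable_nat_add_iff N).2 (summable_ee t))
      (((summable_nat_add_iff N).2 (summable_bb t)).mul_left _)
    rw [ee_eq]
    have h2 : 6 / (((n + N : ℕ) : ℝ) + 2) ≤ ε / 4 := hNe (n + N) (Nat.le_add_left N n)
    have hb0 : (0 : ℝ) ≤ bb t (n + N) := by unfold bb; positivity
    calc 6 * (catalan (n + N) : ℝ) / (((n + N : ℕ) : ℝ) + 2) * t ^ (n + N) / (n + N)!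
        = (6 / (((n + N : ℕ) : ℝ) + 2)) * bb t (n + N) := by unfold bb; ring
      _ ≤ ε / 4 * bb t (n + N) := mul_le_mul_of_nonneg_right h2 hb0
  calc (∑' n, ee t (n + N)) ≤ ∑' n, ε / 4 * bb t (n + N) := h1
    _ = ε / 4 * ∑' n, bb t (n + N) := tsum_mul_left
    _ ≤ ε / 4 * catalanEGF t :=
        mul_le_mul_of_nonneg_left (tail_le_egf t ht N) (by positivity)

lemma head_bound (N : ℕ) (t : ℝ) (ht1 : 1 ≤ t) :
    (∑ n ∈ Finset.range N, ee t n)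
      ≤ (∑ n ∈ Finset.range N, 6 * (catalan n : ℝ) / n !) * t ^ N := by
  rw [Finset.sum_mul]
  apply Finset.sum_le_sum
  intro n hn
  rw [ee_eq]
  have hn' : n ≤ N := (Finset.mem_range.1 hn).le
  have htn : t ^ n ≤ t ^ N := pow_le_pow_right₀ ht1 hn'
  have hdiv : 6 * (catalan n : ℝ) / ((n : ℝ) + 2) ≤ 6 * (catalan n : ℝ) := by
    apply div_le_self (by positivity)
    have := Nat.cast_nonneg (α := ℝ) n
    linarith
  calc 6 * (catalan n : ℝ) / ((n : ℝ) + 2) * t ^ n / n !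
      ≤ 6 * (catalan n : ℝ) / ((n : ℝ) + 2) * t ^ N / n ! := by gcongr
    _ ≤ 6 * (catalan n : ℝ) * t ^ N / n ! := by gcongr
    _ = 6 * (catalan n : ℝ) / n ! * t ^ N := by ring

/-- The main estimate: for suitable `N` and large `t`, the logarithmic derivative is
within `ε` of `4`. -/
lemma main_est (ε : ℝ) (hε : 0 < ε) (N : ℕ)
    (hNe : ∀ n : ℕ, N ≤ n → 6 / ((n : ℝ) + 2) ≤ ε / 4)
    (C K : ℝ) (hC : C = ∑ n ∈ Finset.range N, 6 * (catalan n : ℝ) / n !)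
    (hK : K = ε / 2 * ((catalan (N + 1) : ℝ) / (N + 1)!)) (hK0 : 0 < K)
    (t : ℝ) (ht1 : 1 ≤ t) (htCK : C / K ≤ t) :
    dist (deriv catalanEGF t / catalanEGF t) 4 < ε := by
  have ht0 : (0 : ℝ) ≤ t := by linarith
  have hB0 : 0 < catalanEGF t := egf_pos t ht0
  set A : ℝ := ∑' n : ℕ, (catalan (n + 1) : ℝ) * t ^ n / n ! with hA
  have hderiv : deriv catalanEGF t = A := (hasDerivAt_egf t).deriv
  have hE : (∑' n, ee t n) = 4 * catalanEGF t - A := ee_tsum t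
  have hA4B : A ≤ 4 * catalanEGF t := by
    have h6 : 0 ≤ ∑' n, ee t n := tsum_nonneg (ee_nonneg t ht0)
    rw [hE] at h6
    linarith
  have hsplit := Summable.sum_add_tsum_nat_add N (summable_ee t)
  have htail := tail_bound ε hε N hNe t ht0
  have hhead := head_bound N t ht1
  have hCt : C * t ^ N ≤ ε / 2 * catalanEGF t := by
    have h1 : C ≤ K * t := by
      have := (div_le_iff₀ hK0).1 htCK
      linarith
    have h2 : (catalan (N + 1) : ℝ) * t ^ (N + 1) / (N + 1)! ≤ catalanEGF t := le_egf t ht0 (N + 1)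
    calc C * t ^ N ≤ K * t * t ^ N := mul_le_mul_of_nonneg_right h1 (by positivity)
      _ = ε / 2 * ((catalan (N + 1) : ℝ) * t ^ (N + 1) / (N + 1)!) := by rw [hK]; ring
      _ ≤ ε / 2 * catalanEGF t := mul_le_mul_of_nonneg_left h2 (by positivity)
  have hEle : 4 * catalanEGF t - A ≤ 3 * ε / 4 * catalanEGF t := by
    have h7 : (∑' n, ee t n) = (∑ n ∈ Finset.range N, ee t n) + ∑' n, ee t (n + N) :=
      hsplit.symm
    rw [hE] at h7
    rw [← hC] at hhead
    linarith
  have hdist : dist (A / catalanEGF t) 4 = (4 * catalanEGF t - A) / catalanEGF t := by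
    rw [Real.dist_eq]
    have h1 : A / catalanEGF t - 4 = -((4 * catalanEGF t - A) / catalanEGF t) := by
      field_simp
      ring
    rw [h1, abs_neg, abs_of_nonneg (div_nonneg (by linarith) hB0.le)]
  rw [hderiv, hdist]
  calc (4 * catalanEGF t - A) / catalanEGF t ≤ 3 * ε / 4 := by
        rw [div_le_iff₀ hB0]
        linarith [hEle]
    _ < ε := by linarith

theorem main :
    Filter.Tendsto (fun t : ℝ => deriv catalanEGF t / catalanEGF t)
      Filter.atTop (nhds 4) := by
  rw [Metric.tendsto_atTop]
  intro ε hε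
  obtain ⟨N, hNe⟩ : ∃ N : ℕ, ∀ n : ℕ, N ≤ n → 6 / ((n : ℝ) + 2) ≤ ε / 4 := by
    refine ⟨⌈24 / ε⌉₊, fun n hn => ?_⟩
    have h1 : (24 : ℝ) / ε ≤ ⌈24 / ε⌉₊ := Nat.le_ceil _
    have h2 : ((⌈24 / ε⌉₊ : ℕ) : ℝ) ≤ n := by exact_mod_cast hn
    have h3 : (24 : ℝ) / ε ≤ (n : ℝ) + 2 := by linarith
    have h4 : (24 : ℝ) ≤ ε * ((n : ℝ) + 2) := by
      rw [div_le_iff₀ hε] at h3; linarith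
    rw [div_le_div_iff₀ (by positivity) (by norm_num)]
    nlinarith
  obtain ⟨C, hC⟩ : ∃ C : ℝ, C = ∑ n ∈ Finset.range N, 6 * (catalan n : ℝ) / n ! := ⟨_, rfl⟩
  obtain ⟨K, hK⟩ : ∃ K : ℝ, K = ε / 2 * ((catalan (N + 1) : ℝ) / (N + 1)!) := ⟨_, rfl⟩
  have hK0 : 0 < K := by
    have h2 : (0 : ℝ) < catalan (N + 1) := by exact_mod_cast catalan_pos (N + 1)
    rw [hK]
    positivity
  refine ⟨max 1 (C / K), fun t ht => ?_⟩
  exact main_est ε hε N hNe C K hC hK hK0 t (le_trans (le_max_left _ _) ht)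
    (le_trans (le_max_right _ _) ht)

end CatalanEGFAux

/-- For the exponential generating function f of the Catalan numbers,
f'(t)/f(t) tends to 4 as t → +∞. -/
theorem catalan_egf_logderiv_tendsto_atTop :
    Filter.Tendsto (fun t : ℝ => deriv catalanEGF t / catalanEGF t)
      Filter.atTop (nhds 4) := CatalanEGFAux.main
end
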